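/- The assignment E_j ↦ (v_j^{−1}−v_j)^{−1}·ⱼ𝒮, K_i^{±1} ↦ 𝒦_{±i}, J_i^{±1} ↦ 𝒥_{±i} extends to a (unique) 𝔽-algebra anti-homomorphism ρ⁺: ̂'𝔣⁺ → End_𝔽( ̂'𝔣⁻). -/

import Mathlib

open scoped TensorProduct

noncomputable section

/-- A Cartan datum on `I`. -/
structure CartanDatum (I : Type) where
  c : I → I → ℤ
  symm : ∀ i j, c i j = c j i
  pos : ∀ i, 0 < c i i
  even : ∀ i, Even (c i i)
  dvd : ∀ i j, i ≠ j → c i i ∣ 2 * c i j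
  nonpos : ∀ i j, i ≠ j → 2 * c i j ≤ 0

namespace CartanDatum

variable {I : Type} (cd : CartanDatum I)

/-- `d i = (i·i)/2`. -/
def d (i : I) : ℤ := cd.c i i / 2

/-- `a i j = 2(i·j)/(i·i)`. -/
def a (i j : I) : ℤ := 2 * cd.c i j / cd.c i i

/-- Extension of the pairing to `ℕ[I] × ℕ[I]`. -/
def dotN (ν μ : I →₀ ℕ) : ℤ :=
  ν.sum fun i m => μ.sum fun j n => (m : ℤ) * (n : ℤ) * cd.c i j

end CartanDatum

/-- A multiplicative bilinear form `ℕ[I] × ℕ[I] → 𝔽`. -/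
structure MultForm (I 𝔽 : Type) [Field 𝔽] where
  f : (I →₀ ℕ) → (I →₀ ℕ) → 𝔽
  add_left : ∀ ν ν' μ, f (ν + ν') μ = f ν μ * f ν' μ
  add_right : ∀ μ ν ν', f μ (ν + ν') = f μ ν * f μ ν'
  ne_zero : ∀ ν μ, f ν μ ≠ 0

/-- The trivial multiplicative bilinear form, constantly `1`. -/
def trivMF (I 𝔽 : Type) [Field 𝔽] : MultForm I 𝔽 :=
  ⟨fun _ _ => 1, fun _ _ _ => by ring, fun _ _ _ => by ring, fun _ _ => one_ne_zero⟩

variable {I : Type}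

/-- The generator `i` of `ℕ[I]`. -/
def δN (i : I) : I →₀ ℕ := Finsupp.single i 1

/-- The model for the free algebra `'𝔣` on the `θ i`. -/
abbrev FA (𝔽 I : Type) [Field 𝔽] := MonoidAlgebra 𝔽 (FreeMonoid I)

/-- The generator `θ i` of `'𝔣`. -/
def θ (𝔽 : Type) [Field 𝔽] {I : Type} (i : I) : FA 𝔽 I :=
  MonoidAlgebra.of 𝔽 (FreeMonoid I) (FreeMonoid.of i)

/-- The `ℕ[I]`-degree of a word. -/
def wt [DecidableEq I] (w : FreeMonoid I) : I →₀ ℕ :=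
  Multiset.toFinsupp (↑(FreeMonoid.toList w))

/-- Homogeneity of degree `ν` in `'𝔣`. -/
def IsHomog {𝔽 : Type} [Field 𝔽] [DecidableEq I] (ν : I →₀ ℕ) (x : FA 𝔽 I) : Prop :=
  ∀ w ∈ Finsupp.support (MonoidAlgebra.coeff x : FreeMonoid I →₀ 𝔽), wt w = ν

/-- The model for `'𝔣 ⊗ '𝔣` (basis: pairs of words). -/
abbrev TA (𝔽 I : Type) [Field 𝔽] := MonoidAlgebra 𝔽 (FreeMonoid I × FreeMonoid I)

/-- The tensor `x ⊗ y` in the model of `'𝔣 ⊗ '𝔣`. -/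
def tmul {𝔽 : Type} [Field 𝔽] (x y : FA 𝔽 I) : TA 𝔽 I :=
  Finsupp.sum (MonoidAlgebra.coeff x : FreeMonoid I →₀ 𝔽) fun w a =>
    Finsupp.sum (MonoidAlgebra.coeff y : FreeMonoid I →₀ 𝔽) fun u b =>
      MonoidAlgebra.ofCoeff (Finsupp.single (w, u) (a * b) : (FreeMonoid I × FreeMonoid I) →₀ 𝔽)

/-- The twisted multiplication on `'𝔣 ⊗ '𝔣`:
`(x₁⊗x₂)(y₁⊗y₂) = v^{-|y₁|·|x₂|} β(|x₂|,|y₁|) x₁y₁ ⊗ x₂y₂`. -/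
def tMul [DecidableEq I] {𝔽 : Type} [Field 𝔽] (cd : CartanDatum I) (v : 𝔽)
    (β : MultForm I 𝔽) (z z' : TA 𝔽 I) : TA 𝔽 I :=
  Finsupp.sum (MonoidAlgebra.coeff z : (FreeMonoid I × FreeMonoid I) →₀ 𝔽) fun p a =>
    Finsupp.sum (MonoidAlgebra.coeff z' : (FreeMonoid I × FreeMonoid I) →₀ 𝔽) fun q b =>
      MonoidAlgebra.ofCoeff (Finsupp.single (p.1 * q.1, p.2 * q.2)
        (a * b * v ^ (-(cd.dotN (wt q.1) (wt p.2))) * β.f (wt p.2) (wt q.1))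
        : (FreeMonoid I × FreeMonoid I) →₀ 𝔽)

/-- The bilinear form on `'𝔣 ⊗ '𝔣` induced by a form `B` on `'𝔣`:
`(x₁⊗x₂, y₁⊗y₂) = α(|x₁|,|x₂|) (x₁,y₁) (x₂,y₂)` for homogeneous `x₁, x₂`. -/
def pairT [DecidableEq I] {𝔽 : Type} [Field 𝔽] (α : MultForm I 𝔽)
    (B : FA 𝔽 I →ₗ[𝔽] FA 𝔽 I →ₗ[𝔽] 𝔽) (z z' : TA 𝔽 I) : 𝔽 :=
  Finsupp.sum (MonoidAlgebra.coeff z : (FreeMonoid I × FreeMonoid I) →₀ 𝔽) fun p a =>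
    Finsupp.sum (MonoidAlgebra.coeff z' : (FreeMonoid I × FreeMonoid I) →₀ 𝔽) fun q b =>
      a * b * α.f (wt p.1) (wt p.2)
        * B (MonoidAlgebra.single p.1 1) (MonoidAlgebra.single q.1 1)
        * B (MonoidAlgebra.single p.2 1) (MonoidAlgebra.single q.2 1)

/-- The quantum integer `[n]_c`. -/
def qnum {𝔽 : Type} [Field 𝔽] (c : 𝔽) (n : ℕ) : 𝔽 :=
  (c ^ (n : ℤ) - c ^ (-(n : ℤ))) / (c - c⁻¹)

/-- The quantum factorial `[n]_c!`. -/
def qfact {𝔽 : Type} [Field 𝔽] (c : 𝔽) (n : ℕ) : 𝔽 :=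
  ∏ k ∈ Finset.range n, qnum c (k + 1)

/-- The divided power `θ_i^{(n)} = θ_i^n / [n]_{v_i}!`. -/
def θdiv [DecidableEq I] {𝔽 : Type} [Field 𝔽] (cd : CartanDatum I) (v : 𝔽)
    (i : I) (n : ℕ) : FA 𝔽 I :=
  (qfact (v ^ cd.d i) n)⁻¹ • (θ 𝔽 i) ^ n

/-- The twisted quantum Serre element
`D_{ij} = Σ_{k+k'=1-a_{ij}} (-1)^k β(i,j)^{-k} θ_i^{(k)} θ_j θ_i^{(k')}`. -/
def Dij [DecidableEq I] {𝔽 : Type} [Field 𝔽] (cd : CartanDatum I) (v : 𝔽)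
    (g : I → I → 𝔽) (i j : I) : FA 𝔽 I :=
  ∑ k ∈ Finset.range ((1 - cd.a i j).toNat + 1),
    ((-1 : 𝔽) ^ k * ((g i j)⁻¹) ^ k) •
      (θdiv cd v i k * θ 𝔽 j * θdiv cd v i ((1 - cd.a i j).toNat - k))

end
noncomputable section

variable {I : Type}

/-- The generator `i` of `ℤ[I]`. -/
def δZ (i : I) : I →₀ ℤ := Finsupp.single i 1

/-- The inclusion `ℕ[I] → ℤ[I]`. -/
def nz (ν : I →₀ ℕ) : I →₀ ℤ := Finsupp.mapRange (fun n : ℕ => (n : ℤ)) rfl ν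

/-- The multiplicative extension to `ℤ[I] × ℤ[I]` of generator values `g : I → I → 𝔽`. -/
def extZ {𝔽 : Type} [Field 𝔽] (g : I → I → 𝔽) (ν μ : I →₀ ℤ) : 𝔽 :=
  ν.prod fun i m => μ.prod fun j n => g i j ^ (m * n)

/-- The form `⟨i,j⟩ = v^{-i·j} β(i,j) ξ(j,i)`, extended multiplicatively to `ℤ[I]`. -/
def ang {𝔽 : Type} [Field 𝔽] (cd : CartanDatum I) (v : 𝔽) (βg ξg : I → I → 𝔽) :
    (I →₀ ℤ) → (I →₀ ℤ) → 𝔽 :=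
  extZ fun i j => v ^ (-(cd.c i j)) * βg i j * ξg j i

/-- The monomial in `F : I → A` associated with a word `w`. -/
def wordProd {A : Type} [Monoid A] (F : I → A) (w : FreeMonoid I) : A :=
  ((FreeMonoid.toList w).map F).prod

/-- `x` is homogeneous of degree `μ` in the subalgebra generated by the image of `F`. -/
def HomogIn (𝔽 : Type) [Field 𝔽] [DecidableEq I] {A : Type} [Ring A] [Algebra 𝔽 A]
    (F : I → A) (μ : I →₀ ℕ) (x : A) : Prop :=
  x ∈ Submodule.span 𝔽 {z | ∃ w, wt w = μ ∧ z = wordProd F w}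

end
set_option linter.unusedSectionVars false
section RhoAux
variable {I : Type} [DecidableEq I] {𝔽 : Type} [Field 𝔽]

theorem wt_one' : wt (1 : FreeMonoid I) = 0 := by simp [wt]

theorem wt_mul' (w u : FreeMonoid I) : wt (w * u) = wt w + wt u := by
  simp only [wt, FreeMonoid.toList_mul]
  rw [← Multiset.coe_add, map_add]

theorem wt_of' (i : I) : wt (FreeMonoid.of i) = δN i := by
  simp [wt, δN, FreeMonoid.toList_of]

theorem nz_zero' {I : Type} : nz (0 : I →₀ ℕ) = 0 := by simp [nz]

theorem nz_add' {I : Type} (a b : I →₀ ℕ) : nz (a + b) = nz a + nz b :=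
  Finsupp.mapRange_add (fun x y => Nat.cast_add x y) a b

theorem nz_delta' {I : Type} (i : I) : nz (δN i) = δZ i := by
  simp [nz, δN, δZ, Finsupp.mapRange_single]

theorem extZ_zero_left' (g : I → I → 𝔽) (μ : I →₀ ℤ) : extZ g 0 μ = 1 := by
  simp [extZ]

theorem extZ_zero_right' (g : I → I → 𝔽) (ν : I →₀ ℤ) : extZ g ν 0 = 1 := by
  simp only [extZ, Finsupp.prod_zero_index]
  rw [Finsupp.prod]; exact Finset.prod_const_one

theorem extZ_single_single' (g : I → I → 𝔽) (i j : I) : extZ g (δZ i) (δZ j) = g i j := by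
  simp [extZ, δZ, Finsupp.prod_single_index]

theorem extZ_add_left' (g : I → I → 𝔽) (hg : ∀ i j, g i j ≠ 0) (a b μ : I →₀ ℤ) :
    extZ g (a + b) μ = extZ g a μ * extZ g b μ := by
  unfold extZ
  rw [Finsupp.prod_add_index]
  · intro i _
    simp only [zero_mul, zpow_zero]
    rw [Finsupp.prod]; exact Finset.prod_const_one
  · intro i _ m m'
    rw [← Finsupp.prod_mul]
    apply Finsupp.prod_congr
    intro j _
    rw [add_mul, zpow_add₀ (hg i j)]

theorem extZ_add_right' (g : I → I → 𝔽) (hg : ∀ i j, g i j ≠ 0) (ν a b : I →₀ ℤ) :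
    extZ g ν (a + b) = extZ g ν a * extZ g ν b := by
  unfold extZ
  rw [← Finsupp.prod_mul]
  apply Finsupp.prod_congr
  intro i _
  rw [Finsupp.prod_add_index]
  · intro j _
    simp
  · intro j _ m m'
    rw [mul_add, zpow_add₀ (hg i j)]

theorem extZ_ne_zero' (g : I → I → 𝔽) (hg : ∀ i j, g i j ≠ 0) (ν μ : I →₀ ℤ) :
    extZ g ν μ ≠ 0 := by
  unfold extZ
  apply Finsupp.prod_ne_zero_iff.mpr
  intro i _
  apply Finsupp.prod_ne_zero_iff.mpr
  intro j _
  exact zpow_ne_zero _ (hg i j)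

theorem wordProd_one' {A : Type} [Monoid A] (F : I → A) : wordProd F 1 = 1 := by
  simp [wordProd]

theorem wordProd_mul' {A : Type} [Monoid A] (F : I → A) (w u : FreeMonoid I) :
    wordProd F (w * u) = wordProd F w * wordProd F u := by
  simp [wordProd, FreeMonoid.toList_mul]

theorem wordProd_of' {A : Type} [Monoid A] (F : I → A) (i : I) :
    wordProd F (FreeMonoid.of i) = F i := by
  simp [wordProd]

theorem map_mem_span' {M : Type} [AddCommMonoid M] [Module 𝔽 M]
    (f : M →ₗ[𝔽] M) (S T : Set M) (h : ∀ s ∈ S, f s ∈ Submodule.span 𝔽 T)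
    {x : M} (hx : x ∈ Submodule.span 𝔽 S) : f x ∈ Submodule.span 𝔽 T := by
  induction hx using Submodule.span_induction with
  | mem m hm => exact h m hm
  | zero => simp
  | add a b _ _ ha hb => rw [map_add]; exact Submodule.add_mem _ ha hb
  | smul c a _ ha => rw [map_smul]; exact Submodule.smul_mem _ _ ha

theorem eigen_span' {M : Type} [AddCommMonoid M] [Module 𝔽 M]
    (f : M →ₗ[𝔽] M) (s : 𝔽) (S : Set M) (h : ∀ m ∈ S, f m = s • m)
    {x : M} (hx : x ∈ Submodule.span 𝔽 S) : f x = s • x := by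
  induction hx using Submodule.span_induction with
  | mem m hm => exact h m hm
  | zero => simp
  | add a b _ _ ha hb => rw [map_add, ha, hb, smul_add]
  | smul c a _ ha => rw [map_smul, ha, smul_comm]

end RhoAux

theorem exists_unique_rho_plus
    {I : Type} [Fintype I] [DecidableEq I] (cd : CartanDatum I)
    {𝔽 : Type} [Field 𝔽] [CharZero 𝔽] (v : 𝔽) (hv : Transcendental ℚ v)
    (βg ξg : I → I → 𝔽)
    (hββ : ∀ i j, βg i j * βg j i = 1) (hβii : ∀ i, βg i i = 1)
    (hξsymm : ∀ i j, ξg i j = ξg j i) (hξne : ∀ i j, ξg i j ≠ 0)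
    {Ap : Type} [Ring Ap] [Algebra 𝔽 Ap]
    (E : I → Ap) (K Jp : (I →₀ ℤ) → Ap)
    (hK0 : K 0 = 1) (hKadd : ∀ a b, K (a + b) = K a * K b)
    (hJ0 : Jp 0 = 1) (hJadd : ∀ a b, Jp (a + b) = Jp a * Jp b)
    (hKJ : ∀ a b, K a * Jp b = Jp b * K a)
    (hKE : ∀ i j : I, K (δZ i) * E j = ang cd v βg ξg (δZ i) (δZ j) • (E j * K (δZ i)))
    (hJE : ∀ i j : I, Jp (δZ i) * E j = ξg j i • (E j * Jp (δZ i)))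
    (bp : Module.Basis ((I →₀ ℤ) × FreeMonoid I × (I →₀ ℤ)) 𝔽 Ap)
    (hbp : ∀ p, bp p = K p.1 * wordProd E p.2.1 * Jp p.2.2)
    {Am : Type} [Ring Am] [Algebra 𝔽 Am]
    (F : I → Am) (K' J' : (I →₀ ℤ) → Am)
    (hK'0 : K' 0 = 1) (hK'add : ∀ a b, K' (a + b) = K' a * K' b)
    (hJ'0 : J' 0 = 1) (hJ'add : ∀ a b, J' (a + b) = J' a * J' b)
    (hK'J' : ∀ a b, K' a * J' b = J' b * K' a)
    (hK'F : ∀ i j : I, K' (δZ i) * F j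
      = (ang cd v βg ξg (δZ j) (δZ i) * (ξg i j)⁻¹) • (F j * K' (δZ i)))
    (hJ'F : ∀ i j : I, J' (δZ i) * F j = F j * J' (δZ i))
    (bm : Module.Basis ((I →₀ ℤ) × FreeMonoid I × (I →₀ ℤ)) 𝔽 Am)
    (hbm : ∀ p, bm p = K' p.1 * wordProd F p.2.1 * J' p.2.2)
    (cK cJ : (I →₀ ℤ) → (Am →ₗ[𝔽] Am))
    (hcK : ∀ (ν τ₁ τ₂ : I →₀ ℤ) (w : FreeMonoid I),
      cK ν (K' τ₁ * wordProd F w * J' τ₂)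
        = (ang cd v βg ξg ν τ₁ * ang cd v βg ξg ν (nz (wt w))) • (K' τ₁ * wordProd F w * J' τ₂))
    (hcJ : ∀ (ν τ₁ τ₂ : I →₀ ℤ) (w : FreeMonoid I),
      cJ ν (K' τ₁ * wordProd F w * J' τ₂)
        = (extZ ξg τ₁ ν * extZ ξg (nz (wt w)) ν) • (K' τ₁ * wordProd F w * J' τ₂))
    (iS : I → (Am →ₗ[𝔽] Am))
    (hiS0 : ∀ (j : I) (τ₁ τ₂ : I →₀ ℤ), iS j (K' τ₁ * J' τ₂) = 0)
    (hiSF : ∀ j i : I, iS j (F i) = if i = j then ξg i j • (1 : Am) else 0)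
    (hiSmul : ∀ (j : I) (x y : Am), iS j (x * y) = iS j x * cJ (δZ j) y + cK (δZ j) x * iS j y)
    :
    ∃! ρ : Ap →ₗ[𝔽] Module.End 𝔽 Am,
      (∀ x y : Ap, ρ (x * y) = ρ y * ρ x) ∧ ρ 1 = 1 ∧
      (∀ j : I, ρ (E j) = (v ^ (-(cd.d j)) - v ^ (cd.d j))⁻¹ • iS j) ∧
      (∀ i : I, ρ (K (δZ i)) = cK (δZ i)) ∧ (∀ i : I, ρ (K (-(δZ i))) = cK (-(δZ i))) ∧
      (∀ i : I, ρ (Jp (δZ i)) = cJ (δZ i)) ∧ (∀ i : I, ρ (Jp (-(δZ i))) = cJ (-(δZ i))) := by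
  classical
  -- abbreviations
  set A : (I →₀ ℤ) → (I →₀ ℤ) → 𝔽 := ang cd v βg ξg with hAdef
  set X : (I →₀ ℤ) → (I →₀ ℤ) → 𝔽 := extZ ξg with hXdef
  -- scalar facts
  have hvne : v ≠ 0 := by
    intro h; exact hv (h ▸ isAlgebraic_zero)
  have hβne : ∀ i j, βg i j ≠ 0 := by
    intro i j h
    have := hββ i j
    rw [h, zero_mul] at this
    exact zero_ne_one this
  have hgAne : ∀ i j, v ^ (-(cd.c i j)) * βg i j * ξg j i ≠ 0 := fun i j =>
    mul_ne_zero (mul_ne_zero (zpow_ne_zero _ hvne) (hβne i j)) (hξne j i)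
  have hAne : ∀ ν μ, A ν μ ≠ 0 := fun ν μ => extZ_ne_zero' _ hgAne ν μ
  have hAaddL : ∀ a b μ, A (a + b) μ = A a μ * A b μ := fun a b μ =>
    extZ_add_left' _ hgAne a b μ
  have hAaddR : ∀ ν a b, A ν (a + b) = A ν a * A ν b := fun ν a b =>
    extZ_add_right' _ hgAne ν a b
  have hA0L : ∀ μ, A 0 μ = 1 := fun μ => extZ_zero_left' _ μ
  have hA0R : ∀ ν, A ν 0 = 1 := fun ν => extZ_zero_right' _ ν
  have hXne : ∀ ν μ, X ν μ ≠ 0 := fun ν μ => extZ_ne_zero' _ hξne ν μ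
  have hXaddL : ∀ a b μ, X (a + b) μ = X a μ * X b μ := fun a b μ =>
    extZ_add_left' _ hξne a b μ
  have hXaddR : ∀ ν a b, X ν (a + b) = X ν a * X ν b := fun ν a b =>
    extZ_add_right' _ hξne ν a b
  have hX0L : ∀ μ, X 0 μ = 1 := fun μ => extZ_zero_left' _ μ
  have hX0R : ∀ ν, X ν 0 = 1 := fun ν => extZ_zero_right' _ ν
  have hXss : ∀ i j, X (δZ i) (δZ j) = ξg i j := fun i j => extZ_single_single' _ i j
  -- cK/cJ algebra
  have cK0 : cK 0 = 1 := by
    apply bm.ext; intro p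
    rw [hbm p, hcK, hA0L, hA0L, one_mul, one_smul, Module.End.one_apply]
  have cJ0 : cJ 0 = 1 := by
    apply bm.ext; intro p
    have h : cJ 0 (bm p) = (X p.1 0 * X (nz (wt p.2.1)) 0) • bm p := by
      rw [hbm p]; exact hcJ 0 p.1 p.2.2 p.2.1
    rw [h, hX0R, hX0R, one_mul, one_smul, Module.End.one_apply]
  have cKadd : ∀ a b, cK (a + b) = cK a * cK b := by
    intro a b; apply bm.ext; intro p
    rw [Module.End.mul_apply, hbm p, hcK, hcK, map_smul, hcK, hAaddL, hAaddL, smul_smul]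
    congr 1; ring
  have cJadd : ∀ a b, cJ (a + b) = cJ a * cJ b := by
    intro a b; apply bm.ext; intro p
    have h1 : cJ (a + b) (bm p) = (X p.1 (a+b) * X (nz (wt p.2.1)) (a+b)) • bm p := by
      rw [hbm p]; exact hcJ (a+b) p.1 p.2.2 p.2.1
    have h2 : cJ b (bm p) = (X p.1 b * X (nz (wt p.2.1)) b) • bm p := by
      rw [hbm p]; exact hcJ b p.1 p.2.2 p.2.1
    have h3 : cJ a (bm p) = (X p.1 a * X (nz (wt p.2.1)) a) • bm p := by
      rw [hbm p]; exact hcJ a p.1 p.2.2 p.2.1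
    rw [Module.End.mul_apply, h1, h2, map_smul, h3, hXaddR, hXaddR, smul_smul]
    congr 1; ring
  have cKcJ : ∀ a b, cK a * cJ b = cJ b * cK a := by
    intro a b; apply bm.ext; intro p
    have h2 : cJ b (bm p) = (X p.1 b * X (nz (wt p.2.1)) b) • bm p := by
      rw [hbm p]; exact hcJ b p.1 p.2.2 p.2.1
    have h1 : cK a (bm p) = (A a p.1 * A a (nz (wt p.2.1))) • bm p := by
      rw [hbm p]; exact hcK a p.1 p.2.2 p.2.1
    rw [Module.End.mul_apply, Module.End.mul_apply, h1, h2, map_smul, map_smul, h1, h2,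
      smul_smul, smul_smul]
    congr 1; ring
  -- iS structure
  have iS_K' : ∀ (j : I) (τ1 : I →₀ ℤ), iS j (K' τ1) = 0 := by
    intro j τ1; have h := hiS0 j τ1 0; rwa [hJ'0, mul_one] at h
  have iS_J' : ∀ (j : I) (τ2 : I →₀ ℤ), iS j (J' τ2) = 0 := by
    intro j τ2; have h := hiS0 j 0 τ2; rwa [hK'0, one_mul] at h
  have cK_K' : ∀ (ν τ1 : I →₀ ℤ), cK ν (K' τ1) = A ν τ1 • K' τ1 := by
    intro ν τ1; have h := hcK ν τ1 0 1
    rwa [wordProd_one', mul_one, hJ'0, mul_one, wt_one', nz_zero', hA0R, mul_one] at h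
  have cJ_WJ : ∀ (ν : I →₀ ℤ) (w : FreeMonoid I) (τ2 : I →₀ ℤ),
      cJ ν (wordProd F w * J' τ2) = X (nz (wt w)) ν • (wordProd F w * J' τ2) := by
    intro ν w τ2; have h := hcJ ν 0 τ2 w
    rwa [hK'0, one_mul, hX0L, one_mul] at h
  have cJ_J' : ∀ (ν τ2 : I →₀ ℤ), cJ ν (J' τ2) = J' τ2 := by
    intro ν τ2; have h := cJ_WJ ν 1 τ2
    rwa [wordProd_one', one_mul, wt_one', nz_zero', hX0L, one_smul] at h
  have cK_W : ∀ (ν : I →₀ ℤ) (w : FreeMonoid I),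
      cK ν (wordProd F w) = A ν (nz (wt w)) • wordProd F w := by
    intro ν w; have h := hcK ν 0 0 w
    rwa [hK'0, one_mul, hJ'0, mul_one, hA0R, one_mul] at h
  have cK_gen : ∀ (ν τ1 τ2 : I →₀ ℤ) (μ : I →₀ ℤ) (m : Am),
      m ∈ Submodule.span 𝔽 {m | ∃ u, nz (wt u) = μ ∧ m = K' τ1 * wordProd F u * J' τ2} →
      cK ν m = (A ν τ1 * A ν μ) • m := by
    intro ν τ1 τ2 μ m hm
    refine eigen_span' (cK ν) _ _ ?_ hm
    rintro x ⟨u, hu, rfl⟩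
    rw [hcK, hu]
  have cJ_gen : ∀ (ν τ1 τ2 : I →₀ ℤ) (μ : I →₀ ℤ) (m : Am),
      m ∈ Submodule.span 𝔽 {m | ∃ u, nz (wt u) = μ ∧ m = K' τ1 * wordProd F u * J' τ2} →
      cJ ν m = (X τ1 ν * X μ ν) • m := by
    intro ν τ1 τ2 μ m hm
    refine eigen_span' (cJ ν) _ _ ?_ hm
    rintro x ⟨u, hu, rfl⟩
    rw [hcJ, hu]
  -- structural lemma for iS on words
  have iS_WJ_mem : ∀ (j : I) (w : FreeMonoid I) (τ2 : I →₀ ℤ),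
      iS j (wordProd F w * J' τ2) ∈ Submodule.span 𝔽
        {m | ∃ u, wt u + δN j = wt w ∧ m = wordProd F u * J' τ2} := by
    intro j w
    induction w using FreeMonoid.inductionOn with
    | one =>
      intro τ2
      rw [wordProd_one', one_mul, iS_J']
      exact Submodule.zero_mem _
    | of i =>
      intro τ2
      rw [wordProd_of', hiSmul, iS_J', mul_zero, add_zero, hiSF, cJ_J']
      by_cases hij : i = j
      · subst hij
        rw [if_pos rfl, smul_mul_assoc, one_mul]
        refine Submodule.smul_mem _ _ (Submodule.subset_span ?_)
        exact ⟨1, by rw [wt_one', zero_add, wt_of'], by rw [wordProd_one', one_mul]⟩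
      · rw [if_neg hij, zero_mul]
        exact Submodule.zero_mem _
    | mul w1 w2 ih1 ih2 =>
      intro τ2
      rw [wordProd_mul', mul_assoc, hiSmul, cJ_WJ]
      apply Submodule.add_mem
      · rw [mul_smul_comm]
        apply Submodule.smul_mem
        have h1 := ih1 0
        simp only [hJ'0, mul_one] at h1
        refine map_mem_span' (LinearMap.mulRight 𝔽 (wordProd F w2 * J' τ2)) _ _ ?_ h1
        rintro s ⟨u, hu, rfl⟩
        refine Submodule.subset_span ⟨u * w2, ?_, ?_⟩
        · rw [wt_mul', wt_mul', ← hu, add_right_comm]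
        · rw [LinearMap.mulRight_apply, wordProd_mul', mul_assoc]
      · rw [cK_W, smul_mul_assoc]
        apply Submodule.smul_mem
        refine map_mem_span' (LinearMap.mulLeft 𝔽 (wordProd F w1)) _ _ ?_ (ih2 τ2)
        rintro s ⟨u, hu, rfl⟩
        refine Submodule.subset_span ⟨w1 * u, ?_, ?_⟩
        · rw [wt_mul', wt_mul', ← hu, add_assoc]
        · rw [LinearMap.mulLeft_apply, wordProd_mul', mul_assoc]
  have iS_KWJ : ∀ (j : I) (τ1 : I →₀ ℤ) (w : FreeMonoid I) (τ2 : I →₀ ℤ),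
      iS j (K' τ1 * wordProd F w * J' τ2)
        = A (δZ j) τ1 • (K' τ1 * iS j (wordProd F w * J' τ2)) := by
    intro j τ1 w τ2
    rw [mul_assoc, hiSmul, iS_K', zero_mul, zero_add, cK_K', smul_mul_assoc]
  have iS_mem : ∀ (j : I) (τ1 : I →₀ ℤ) (w : FreeMonoid I) (τ2 : I →₀ ℤ),
      iS j (K' τ1 * wordProd F w * J' τ2) ∈ Submodule.span 𝔽
        {m | ∃ u, nz (wt u) = nz (wt w) - δZ j ∧ m = K' τ1 * wordProd F u * J' τ2} := by
    intro j τ1 w τ2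
    rw [iS_KWJ]
    apply Submodule.smul_mem
    refine map_mem_span' (LinearMap.mulLeft 𝔽 (K' τ1)) _ _ ?_ (iS_WJ_mem j w τ2)
    rintro s ⟨u, hu, rfl⟩
    refine Submodule.subset_span ⟨u, ?_, ?_⟩
    · have : nz (wt u) + δZ j = nz (wt w) := by rw [← nz_delta' j, ← nz_add', hu]
      exact eq_sub_of_add_eq this
    · rw [LinearMap.mulLeft_apply, mul_assoc]
  -- commutation of iS with cK and cJ
  have Bop' : ∀ (j : I) (ν : I →₀ ℤ), iS j * cK ν = A ν (δZ j) • (cK ν * iS j) := by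
    intro j ν
    apply bm.ext; intro p
    obtain ⟨τ1, w, τ2⟩ := p
    have hb : bm (τ1, w, τ2) = K' τ1 * wordProd F w * J' τ2 := hbm _
    rw [LinearMap.smul_apply, Module.End.mul_apply, Module.End.mul_apply, hb, hcK, map_smul,
      cK_gen ν τ1 τ2 (nz (wt w) - δZ j) _ (iS_mem j τ1 w τ2), smul_smul]
    congr 1
    have : A ν (nz (wt w)) = A ν (nz (wt w) - δZ j) * A ν (δZ j) := by
      rw [← hAaddR, sub_add_cancel]
    rw [this]; ring
  have Cop' : ∀ (j : I) (ν : I →₀ ℤ), iS j * cJ ν = X (δZ j) ν • (cJ ν * iS j) := by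
    intro j ν
    apply bm.ext; intro p
    obtain ⟨τ1, w, τ2⟩ := p
    have hb : bm (τ1, w, τ2) = K' τ1 * wordProd F w * J' τ2 := hbm _
    rw [LinearMap.smul_apply, Module.End.mul_apply, Module.End.mul_apply, hb, hcJ, map_smul,
      cJ_gen ν τ1 τ2 (nz (wt w) - δZ j) _ (iS_mem j τ1 w τ2), smul_smul]
    congr 1
    have : X (nz (wt w)) ν = X (nz (wt w) - δZ j) ν * X (δZ j) ν := by
      rw [← hXaddL, sub_add_cancel]
    rw [this]; ring
  -- the representing operators
  set ρE : I → Module.End 𝔽 Am := fun j => (v ^ (-(cd.d j)) - v ^ (cd.d j))⁻¹ • iS j with hρE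
  set ρW : FreeMonoid I → Module.End 𝔽 Am :=
    fun w => (((FreeMonoid.toList w).map ρE).reverse).prod with hρW
  have ρW1 : ρW 1 = 1 := by
    rw [hρW]; simp [FreeMonoid.toList_one]
  have ρWof : ∀ j, ρW (FreeMonoid.of j) = ρE j := by
    intro j; rw [hρW]; simp [FreeMonoid.toList_of]
  have ρWmul : ∀ w u, ρW (w * u) = ρW u * ρW w := by
    intro w u
    simp only [hρW, FreeMonoid.toList_mul, List.map_append, List.reverse_append,
      List.prod_append]
  have Bop : ∀ (w : FreeMonoid I) (ν : I →₀ ℤ),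
      ρW w * cK ν = A ν (nz (wt w)) • (cK ν * ρW w) := by
    intro w
    induction w using FreeMonoid.inductionOn with
    | one =>
      intro ν
      rw [ρW1, one_mul, mul_one, wt_one', nz_zero', hA0R, one_smul]
    | of j =>
      intro ν
      rw [ρWof, hρE, wt_of', nz_delta', smul_mul_assoc, Bop' j ν, mul_smul_comm, smul_smul,
        smul_smul, mul_comm]
    | mul w1 w2 ih1 ih2 =>
      intro ν
      rw [ρWmul, wt_mul', nz_add', hAaddR, mul_assoc, ih1, mul_smul_comm, ← mul_assoc, ih2,
        smul_mul_assoc, smul_smul, mul_assoc, mul_smul]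
  have Cop : ∀ (w : FreeMonoid I) (ν : I →₀ ℤ),
      ρW w * cJ ν = X (nz (wt w)) ν • (cJ ν * ρW w) := by
    intro w
    induction w using FreeMonoid.inductionOn with
    | one =>
      intro ν
      rw [ρW1, one_mul, mul_one, wt_one', nz_zero', hX0L, one_smul]
    | of j =>
      intro ν
      rw [ρWof, hρE, wt_of', nz_delta', smul_mul_assoc, Cop' j ν, mul_smul_comm, smul_smul,
        smul_smul, mul_comm]
    | mul w1 w2 ih1 ih2 =>
      intro ν
      rw [ρWmul, wt_mul', nz_add', hXaddL, mul_assoc, ih1, mul_smul_comm, ← mul_assoc, ih2,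
        smul_mul_assoc, smul_smul, mul_assoc, mul_smul]
  -- Ap-side commutation
  have Padd : ∀ a b, (∀ j, K a * E j = A a (δZ j) • (E j * K a)) →
      (∀ j, K b * E j = A b (δZ j) • (E j * K b)) →
      (∀ j, K (a + b) * E j = A (a + b) (δZ j) • (E j * K (a + b))) := by
    intro a b ha hb j
    rw [hKadd, mul_assoc, hb, mul_smul_comm, ← mul_assoc, ha, smul_mul_assoc, smul_smul,
      hAaddL, mul_comm (A a (δZ j)), mul_assoc (E j), ← hKadd]
  have Pneg : ∀ a, (∀ j, K a * E j = A a (δZ j) • (E j * K a)) →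
      (∀ j, K (-a) * E j = A (-a) (δZ j) • (E j * K (-a))) := by
    intro a ha j
    have hKK : K (-a) * K a = 1 := by rw [← hKadd, neg_add_cancel, hK0]
    have hKK' : K a * K (-a) = 1 := by rw [← hKadd, add_neg_cancel, hK0]
    have hs : A (-a) (δZ j) * A a (δZ j) = 1 := by rw [← hAaddL, neg_add_cancel, hA0L]
    have key : E j * K (-a) = A a (δZ j) • (K (-a) * E j) := by
      calc E j * K (-a) = K (-a) * (K a * E j) * K (-a) := by
            rw [← mul_assoc, hKK, one_mul]
        _ = K (-a) * (A a (δZ j) • (E j * K a)) * K (-a) := by rw [ha j]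
        _ = A a (δZ j) • (K (-a) * E j * (K a * K (-a))) := by
            rw [mul_smul_comm, smul_mul_assoc]
            congr 1
            rw [mul_assoc, mul_assoc, mul_assoc]
        _ = A a (δZ j) • (K (-a) * E j) := by rw [hKK', mul_one]
    rw [key, smul_smul, hs, one_smul]
  have Psingle : ∀ (i : I) (n : ℤ) (j : I), K (Finsupp.single i n) * E j
      = A (Finsupp.single i n) (δZ j) • (E j * K (Finsupp.single i n)) := by
    intro i n
    induction n using Int.induction_on with
    | zero =>
      intro j
      rw [Finsupp.single_zero, hK0, one_mul, hA0L, one_smul, mul_one]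
    | succ n ih =>
      intro j
      have hsplit : Finsupp.single i ((n : ℤ) + 1) = Finsupp.single i (n : ℤ) + δZ i :=
        Finsupp.single_add i _ _
      rw [hsplit]
      exact Padd _ _ ih (fun j => hKE i j) j
    | pred n ih =>
      intro j
      have hsplit : Finsupp.single i (-(n : ℤ) - 1) = Finsupp.single i (-(n : ℤ)) + (-(Finsupp.single i (1 : ℤ))) := by
        rw [← Finsupp.single_neg, ← Finsupp.single_add, sub_eq_add_neg]
      rw [hsplit]
      exact Padd _ _ ih (Pneg _ (fun j => hKE i j)) j
  have PK : ∀ (ν : I →₀ ℤ) (j : I), K ν * E j = A ν (δZ j) • (E j * K ν) := by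
    intro ν
    induction ν using Finsupp.induction with
    | zero =>
      intro j
      rw [hK0, one_mul, hA0L, one_smul, mul_one]
    | single_add i n f _ _ ih =>
      exact Padd _ _ (Psingle i n) ih
  have QJadd : ∀ a b, (∀ j, Jp a * E j = X (δZ j) a • (E j * Jp a)) →
      (∀ j, Jp b * E j = X (δZ j) b • (E j * Jp b)) →
      (∀ j, Jp (a + b) * E j = X (δZ j) (a + b) • (E j * Jp (a + b))) := by
    intro a b ha hb j
    rw [hJadd, mul_assoc, hb, mul_smul_comm, ← mul_assoc, ha, smul_mul_assoc, smul_smul,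
      hXaddR, mul_comm (X (δZ j) a), mul_assoc (E j), ← hJadd]
  have QJneg : ∀ a, (∀ j, Jp a * E j = X (δZ j) a • (E j * Jp a)) →
      (∀ j, Jp (-a) * E j = X (δZ j) (-a) • (E j * Jp (-a))) := by
    intro a ha j
    have hKK : Jp (-a) * Jp a = 1 := by rw [← hJadd, neg_add_cancel, hJ0]
    have hKK' : Jp a * Jp (-a) = 1 := by rw [← hJadd, add_neg_cancel, hJ0]
    have hs : X (δZ j) (-a) * X (δZ j) a = 1 := by rw [← hXaddR, neg_add_cancel, hX0R]
    have key : E j * Jp (-a) = X (δZ j) a • (Jp (-a) * E j) := by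
      calc E j * Jp (-a) = Jp (-a) * (Jp a * E j) * Jp (-a) := by
            rw [← mul_assoc, hKK, one_mul]
        _ = Jp (-a) * (X (δZ j) a • (E j * Jp a)) * Jp (-a) := by rw [ha j]
        _ = X (δZ j) a • (Jp (-a) * E j * (Jp a * Jp (-a))) := by
            rw [mul_smul_comm, smul_mul_assoc]
            congr 1
            rw [mul_assoc, mul_assoc, mul_assoc]
        _ = X (δZ j) a • (Jp (-a) * E j) := by rw [hKK', mul_one]
    rw [key, smul_smul, hs, one_smul]
  have QJsingle : ∀ (i : I) (n : ℤ) (j : I), Jp (Finsupp.single i n) * E j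
      = X (δZ j) (Finsupp.single i n) • (E j * Jp (Finsupp.single i n)) := by
    intro i n
    induction n using Int.induction_on with
    | zero =>
      intro j
      rw [Finsupp.single_zero, hJ0, one_mul, hX0R, one_smul, mul_one]
    | succ n ih =>
      intro j
      have hsplit : Finsupp.single i ((n : ℤ) + 1) = Finsupp.single i (n : ℤ) + δZ i :=
        Finsupp.single_add i _ _
      rw [hsplit]
      refine QJadd _ _ ih (fun j => ?_) j
      rw [hJE i j, hXss]
    | pred n ih =>
      intro j
      have hsplit : Finsupp.single i (-(n : ℤ) - 1) = Finsupp.single i (-(n : ℤ)) + (-(Finsupp.single i (1 : ℤ))) := by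
        rw [← Finsupp.single_neg, ← Finsupp.single_add, sub_eq_add_neg]
      rw [hsplit]
      refine QJadd _ _ ih (QJneg _ (fun j => ?_)) j
      show Jp (δZ i) * E j = X (δZ j) (δZ i) • (E j * Jp (δZ i))
      rw [hJE i j, hXss]
  have PJ : ∀ (ν : I →₀ ℤ) (j : I), Jp ν * E j = X (δZ j) ν • (E j * Jp ν) := by
    intro ν
    induction ν using Finsupp.induction with
    | zero =>
      intro j
      rw [hJ0, one_mul, hX0R, one_smul, mul_one]
    | single_add i n f _ _ ih =>
      exact QJadd _ _ (QJsingle i n) ih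
  have PKW : ∀ (ν : I →₀ ℤ) (w : FreeMonoid I),
      K ν * wordProd E w = A ν (nz (wt w)) • (wordProd E w * K ν) := by
    intro ν w
    induction w using FreeMonoid.inductionOn with
    | one => rw [wordProd_one', one_mul, mul_one, wt_one', nz_zero', hA0R, one_smul]
    | of j => rw [wordProd_of', wt_of', nz_delta']; exact PK ν j
    | mul w1 w2 ih1 ih2 =>
      rw [wordProd_mul', wt_mul', nz_add', hAaddR, ← mul_assoc, ih1, smul_mul_assoc,
        mul_assoc, ih2, mul_smul_comm, smul_smul, ← mul_assoc, mul_smul]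
  have PJW : ∀ (ν : I →₀ ℤ) (w : FreeMonoid I),
      Jp ν * wordProd E w = X (nz (wt w)) ν • (wordProd E w * Jp ν) := by
    intro ν w
    induction w using FreeMonoid.inductionOn with
    | one => rw [wordProd_one', one_mul, mul_one, wt_one', nz_zero', hX0L, one_smul]
    | of j => rw [wordProd_of', wt_of', nz_delta']; exact PJ ν j
    | mul w1 w2 ih1 ih2 =>
      rw [wordProd_mul', wt_mul', nz_add', hXaddL, ← mul_assoc, ih1, smul_mul_assoc,
        mul_assoc, ih2, mul_smul_comm, smul_smul, ← mul_assoc, mul_smul]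
  have hW1K : ∀ (a2 : I →₀ ℤ) (w1 : FreeMonoid I),
      wordProd E w1 * K a2 = (A a2 (nz (wt w1)))⁻¹ • (K a2 * wordProd E w1) := by
    intro a2 w1
    rw [PKW a2 w1, smul_smul, inv_mul_cancel₀ (hAne _ _), one_smul]
  have prodF : ∀ (a1 : I →₀ ℤ) (w1 : FreeMonoid I) (b1 a2 : I →₀ ℤ) (w2 : FreeMonoid I)
      (b2 : I →₀ ℤ),
      (K a1 * wordProd E w1 * Jp b1) * (K a2 * wordProd E w2 * Jp b2)
        = ((A a2 (nz (wt w1)))⁻¹ * X (nz (wt w2)) b1) •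
            (K (a1 + a2) * wordProd E (w1 * w2) * Jp (b1 + b2)) := by
    intro a1 w1 b1 a2 w2 b2
    have h2 : Jp b1 * (wordProd E w2 * Jp b2)
        = X (nz (wt w2)) b1 • (wordProd E w2 * (Jp b1 * Jp b2)) := by
      rw [← mul_assoc, PJW, smul_mul_assoc, mul_assoc]
    calc (K a1 * wordProd E w1 * Jp b1) * (K a2 * wordProd E w2 * Jp b2)
        = K a1 * (wordProd E w1 * ((Jp b1 * K a2) * (wordProd E w2 * Jp b2))) := by
          simp only [mul_assoc]
      _ = K a1 * (wordProd E w1 * (K a2 * (Jp b1 * (wordProd E w2 * Jp b2)))) := by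
          rw [← hKJ]
          simp only [mul_assoc]
      _ = X (nz (wt w2)) b1 •
            (K a1 * (wordProd E w1 * (K a2 * (wordProd E w2 * (Jp b1 * Jp b2))))) := by
          rw [h2, mul_smul_comm, mul_smul_comm, mul_smul_comm]
      _ = X (nz (wt w2)) b1 •
            (K a1 * ((wordProd E w1 * K a2) * (wordProd E w2 * (Jp b1 * Jp b2)))) := by
          simp only [mul_assoc]
      _ = (X (nz (wt w2)) b1 * (A a2 (nz (wt w1)))⁻¹) •
            (K a1 * (K a2 * (wordProd E w1 * (wordProd E w2 * (Jp b1 * Jp b2))))) := by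
          rw [hW1K, smul_mul_assoc, mul_smul_comm, smul_smul]
          simp only [mul_assoc]
      _ = ((A a2 (nz (wt w1)))⁻¹ * X (nz (wt w2)) b1) •
            (K (a1 + a2) * wordProd E (w1 * w2) * Jp (b1 + b2)) := by
          rw [hKadd, wordProd_mul', hJadd, mul_comm (X (nz (wt w2)) b1)]
          simp only [mul_assoc]
  have hKop : ∀ (ν : I →₀ ℤ) (w : FreeMonoid I),
      cK ν * ρW w = (A ν (nz (wt w)))⁻¹ • (ρW w * cK ν) := by
    intro ν w
    rw [Bop, smul_smul, inv_mul_cancel₀ (hAne _ _), one_smul]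
  -- definition of ρ
  set ρ : Ap →ₗ[𝔽] Module.End 𝔽 Am :=
    bp.constr 𝔽 (fun p => cJ p.2.2 * ρW p.2.1 * cK p.1) with hρdef
  have ρKWJ : ∀ (a : I →₀ ℤ) (w : FreeMonoid I) (b : I →₀ ℤ),
      ρ (K a * wordProd E w * Jp b) = cJ b * ρW w * cK a := by
    intro a w b
    have h : K a * wordProd E w * Jp b = bp (a, w, b) := (hbp (a, w, b)).symm
    rw [h, hρdef, Module.Basis.constr_basis]
  have key : ∀ p q, ρ (bp p * bp q) = ρ (bp q) * ρ (bp p) := by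
    rintro ⟨a1, w1, b1⟩ ⟨a2, w2, b2⟩
    have hb1 : bp (a1, w1, b1) = K a1 * wordProd E w1 * Jp b1 := hbp _
    have hb2 : bp (a2, w2, b2) = K a2 * wordProd E w2 * Jp b2 := hbp _
    rw [hb1, hb2, prodF, map_smul, ρKWJ, ρKWJ, ρKWJ]
    calc ((A a2 (nz (wt w1)))⁻¹ * X (nz (wt w2)) b1) • (cJ (b1 + b2) * ρW (w1 * w2) * cK (a1 + a2))
        = ((A a2 (nz (wt w1)))⁻¹ * X (nz (wt w2)) b1) •
            (cJ b2 * (cJ b1 * (ρW w2 * (ρW w1 * (cK a2 * cK a1))))) := by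
          rw [ρWmul, add_comm b1 b2, cJadd, add_comm a1 a2, cKadd]
          simp only [mul_assoc]
      _ = cJ b2 * (ρW w2 * (cK a2 * (cJ b1 * (ρW w1 * cK a1)))) := by
          rw [← mul_assoc (cK a2) (cJ b1), cKcJ, mul_assoc (cJ b1),
            ← mul_assoc (cK a2) (ρW w1), hKop, smul_mul_assoc, mul_assoc (ρW w1),
            ← mul_assoc (ρW w2) (cJ b1), Cop, smul_mul_assoc, mul_assoc (cJ b1)]
          rw [mul_smul_comm, mul_smul_comm, mul_smul_comm, mul_smul_comm, smul_smul,
            mul_comm ((A a2 (nz (wt w1)))⁻¹)]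
      _ = (cJ b2 * ρW w2 * cK a2) * (cJ b1 * ρW w1 * cK a1) := by
          simp only [mul_assoc]
  have step1 : ∀ (q) (x : Ap), ρ (x * bp q) = ρ (bp q) * ρ x := by
    intro q
    have h : ρ.comp (LinearMap.mulRight 𝔽 (bp q))
        = (LinearMap.mulLeft 𝔽 (ρ (bp q))).comp ρ := by
      apply bp.ext; intro p
      simp only [LinearMap.comp_apply, LinearMap.mulRight_apply, LinearMap.mulLeft_apply]
      exact key p q
    intro x
    have := LinearMap.congr_fun h x
    simpa only [LinearMap.comp_apply, LinearMap.mulRight_apply, LinearMap.mulLeft_apply]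
      using this
  have antimul : ∀ x y : Ap, ρ (x * y) = ρ y * ρ x := by
    intro x y
    have h : ρ.comp (LinearMap.mulLeft 𝔽 x) = (LinearMap.mulRight 𝔽 (ρ x)).comp ρ := by
      apply bp.ext; intro q
      simp only [LinearMap.comp_apply, LinearMap.mulLeft_apply, LinearMap.mulRight_apply]
      exact step1 q x
    have := LinearMap.congr_fun h y
    simpa only [LinearMap.comp_apply, LinearMap.mulLeft_apply, LinearMap.mulRight_apply]
      using this
  have ρ1 : ρ 1 = 1 := by
    have h := ρKWJ 0 1 0
    rw [hK0, wordProd_one', hJ0, mul_one, mul_one, cJ0, ρW1, cK0, mul_one, mul_one] at h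
    exact h
  have ρEprop : ∀ j : I, ρ (E j) = (v ^ (-(cd.d j)) - v ^ (cd.d j))⁻¹ • iS j := by
    intro j
    have h := ρKWJ 0 (FreeMonoid.of j) 0
    rw [hK0, hJ0, one_mul, mul_one, wordProd_of', cJ0, cK0, one_mul, mul_one, ρWof] at h
    rw [h]
  have ρKprop : ∀ ν : I →₀ ℤ, ρ (K ν) = cK ν := by
    intro ν
    have h := ρKWJ ν 1 0
    rw [wordProd_one', hJ0, mul_one, mul_one, cJ0, ρW1, one_mul, one_mul] at h
    exact h
  have ρJprop : ∀ ν : I →₀ ℤ, ρ (Jp ν) = cJ ν := by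
    intro ν
    have h := ρKWJ 0 1 ν
    rw [hK0, wordProd_one', one_mul, one_mul, ρW1, cK0, mul_one, mul_one] at h
    exact h
  refine ⟨ρ, ⟨antimul, ρ1, ρEprop, fun i => ρKprop _, fun i => ρKprop _,
    fun i => ρJprop _, fun i => ρJprop _⟩, ?_⟩
  rintro ρ' ⟨ham, h1, hEp, hKp, hKm, hJpp, hJm⟩
  have uadd : ∀ a b, ρ' (K a) = cK a → ρ' (K b) = cK b → ρ' (K (a + b)) = cK (a + b) := by
    intro a b ha hb
    rw [hKadd, ham, ha, hb, ← cKadd, add_comm]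
  have usingle : ∀ (i : I) (n : ℤ), ρ' (K (Finsupp.single i n)) = cK (Finsupp.single i n) := by
    intro i n
    induction n using Int.induction_on with
    | zero => rw [Finsupp.single_zero, hK0, h1, cK0]
    | succ n ih =>
      rw [Finsupp.single_add]
      exact uadd _ _ ih (hKp i)
    | pred n ih =>
      rw [show Finsupp.single i (-(n : ℤ) - 1)
          = Finsupp.single i (-(n : ℤ)) + (-(Finsupp.single i (1 : ℤ))) by
        rw [← Finsupp.single_neg, ← Finsupp.single_add, sub_eq_add_neg]]
      refine uadd _ _ ih ?_
      have h2 : Finsupp.single i (-1 : ℤ) = -(δZ i) := Finsupp.single_neg i 1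
      rw [show -(Finsupp.single i (1:ℤ)) = Finsupp.single i (-1 : ℤ) from (Finsupp.single_neg i 1).symm, h2]
      exact hKm i
  have uK : ∀ ν : I →₀ ℤ, ρ' (K ν) = cK ν := by
    intro ν
    induction ν using Finsupp.induction with
    | zero => rw [hK0, h1, cK0]
    | single_add i n f _ _ ih => exact uadd _ _ (usingle i n) ih
  have vadd : ∀ a b, ρ' (Jp a) = cJ a → ρ' (Jp b) = cJ b → ρ' (Jp (a + b)) = cJ (a + b) := by
    intro a b ha hb
    rw [hJadd, ham, ha, hb, ← cJadd, add_comm]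
  have vsingle : ∀ (i : I) (n : ℤ), ρ' (Jp (Finsupp.single i n)) = cJ (Finsupp.single i n) := by
    intro i n
    induction n using Int.induction_on with
    | zero => rw [Finsupp.single_zero, hJ0, h1, cJ0]
    | succ n ih =>
      rw [Finsupp.single_add]
      exact vadd _ _ ih (hJpp i)
    | pred n ih =>
      rw [show Finsupp.single i (-(n : ℤ) - 1)
          = Finsupp.single i (-(n : ℤ)) + (-(Finsupp.single i (1 : ℤ))) by
        rw [← Finsupp.single_neg, ← Finsupp.single_add, sub_eq_add_neg]]
      refine vadd _ _ ih ?_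
      rw [show -(Finsupp.single i (1:ℤ)) = Finsupp.single i (-1 : ℤ) from (Finsupp.single_neg i 1).symm,
        Finsupp.single_neg i 1]
      exact hJm i
  have uJ : ∀ ν : I →₀ ℤ, ρ' (Jp ν) = cJ ν := by
    intro ν
    induction ν using Finsupp.induction with
    | zero => rw [hJ0, h1, cJ0]
    | single_add i n f _ _ ih => exact vadd _ _ (vsingle i n) ih
  have uW : ∀ w : FreeMonoid I, ρ' (wordProd E w) = ρW w := by
    intro w
    induction w using FreeMonoid.inductionOn with
    | one => rw [wordProd_one', h1, ρW1]
    | of j => rw [wordProd_of', hEp, ρWof, hρE]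
    | mul w1 w2 ih1 ih2 => rw [wordProd_mul', ham, ih1, ih2, ρWmul]
  apply bp.ext
  intro p
  obtain ⟨a, w, b⟩ := p
  have hb : bp (a, w, b) = K a * wordProd E w * Jp b := hbp _
  rw [hb, ρKWJ, ham, ham, uK, uJ, uW, mul_assoc]
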